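/- Let (X,S,T) be a distal minimal system with commuting transformations S and T. Then for x,y ∈ X the following are equivalent: (i) (x,y,y,y) ∈ Q_{S,T}(X); (ii) (x,y) ∈ R_S(X); (iii) (x,y) ∈ R_T(X). In particular R_S(X) = R_T(X) = R_{S,T}(X). -/

import Mathlib

/-- The `n`-th integer iterate of a homeomorphism, as a function. -/
def hpow {X : Type*} [TopologicalSpace X] (S : X ≃ₜ X) (n : ℤ) : X → X :=
  ⇑(S.toEquiv ^ n)

variable {X : Type*} [TopologicalSpace X]

def cube (S T : X ≃ₜ X) : Set (X × X × X × X) :=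
  closure {p | ∃ (x : X) (n m : ℤ),
    p = (x, hpow S n x, hpow T m x, hpow S n (hpow T m x))}

def cube2 (S : X ≃ₜ X) : Set (X × X) :=
  closure {p | ∃ (x : X) (n : ℤ), p = (x, hpow S n x)}

def relS (S T : X ≃ₜ X) : Set (X × X) :=
  {p | ∃ a : X, (p.1, p.2, a, a) ∈ cube S T}

def relT (S T : X ≃ₜ X) : Set (X × X) :=
  {p | ∃ b : X, (p.1, b, p.2, b) ∈ cube S T}

def minimalST (S T : X ≃ₜ X) : Prop :=
  ∀ x : X, Dense {y : X | ∃ n m : ℤ, y = hpow S n (hpow T m x)}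

def minimal1 (S : X ≃ₜ X) : Prop :=
  ∀ x : X, Dense {y : X | ∃ n : ℤ, y = hpow S n x}

def distalST {Y : Type*} [MetricSpace Y] (S T : Y ≃ₜ Y) : Prop :=
  ∀ x y : Y, x ≠ y → ∃ ε > 0, ∀ n m : ℤ,
    ε ≤ dist (hpow S n (hpow T m x)) (hpow S n (hpow T m y))

def proxT {Y : Type*} [MetricSpace Y] (T : Y ≃ₜ Y) : Set (Y × Y) :=
  {p | ∀ ε > 0, ∃ m : ℤ, dist (hpow T m p.1) (hpow T m p.2) < ε}

set_option linter.unusedSectionVars false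


section Hpow

variable {X : Type*} [TopologicalSpace X]

lemma hpow_add_apply (S : X ≃ₜ X) (a b : ℤ) (x : X) :
    hpow S (a + b) x = hpow S a (hpow S b x) := by
  unfold hpow; rw [zpow_add]; rfl

lemma hpow_zero_apply (S : X ≃ₜ X) (x : X) : hpow S 0 x = x := by
  unfold hpow; rw [zpow_zero]; rfl

lemma hpow_one_apply (S : X ≃ₜ X) (x : X) : hpow S 1 x = S x := by
  unfold hpow; rw [zpow_one]; rfl

lemma hpow_negone_apply (S : X ≃ₜ X) (x : X) : hpow S (-1) x = S.symm x := by
  unfold hpow; rw [zpow_neg, zpow_one]; rfl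

lemma hpow_neg_cancel (S : X ≃ₜ X) (m : ℤ) (x : X) :
    hpow S (-m) (hpow S m x) = x := by
  rw [← hpow_add_apply]
  simp [hpow_zero_apply]

lemma continuous_hpow (S : X ≃ₜ X) (n : ℤ) : Continuous (hpow S n) := by
  induction n using Int.induction_on with
  | zero =>
      have h : hpow S 0 = fun x => x := funext (hpow_zero_apply S)
      rw [h]; exact continuous_id
  | succ k ih =>
      have h : hpow S ((k : ℤ) + 1) = fun x => hpow S k (S x) := by
        funext x
        rw [hpow_add_apply, hpow_one_apply]
      rw [h]; exact ih.comp S.continuous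
  | pred k ih =>
      have h : hpow S (-(k : ℤ) - 1) = fun x => hpow S (-k) (S.symm x) := by
        funext x
        rw [sub_eq_add_neg, hpow_add_apply, hpow_negone_apply]
      rw [h]; exact ih.comp S.symm.continuous

lemma hpow_comm (S T : X ≃ₜ X) (hST : ∀ x, S (T x) = T (S x)) (n m : ℤ) (x : X) :
    hpow S n (hpow T m x) = hpow T m (hpow S n x) := by
  have hc : Commute S.toEquiv T.toEquiv := by
    show S.toEquiv * T.toEquiv = T.toEquiv * S.toEquiv
    apply Equiv.ext
    intro x
    exact hST x
  have h2 := (hc.zpow_zpow n m).eq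
  show (S.toEquiv ^ n * T.toEquiv ^ m) x = (T.toEquiv ^ m * S.toEquiv ^ n) x
  rw [h2]

end Hpow

section Ellis

variable {Z : Type*} [TopologicalSpace Z]

lemma comp_right_cont (q : Z → Z) : Continuous fun p : Z → Z => p ∘ q :=
  continuous_pi fun z => continuous_apply (q z)

lemma comp_left_cont {g : Z → Z} (hg : Continuous g) : Continuous fun q : Z → Z => g ∘ q :=
  continuous_pi fun z => hg.comp (continuous_apply z)

lemma closure_comp_mem {Γ : Set (Z → Z)} (hc : ∀ f ∈ Γ, Continuous f)
    (hΓ : ∀ f ∈ Γ, ∀ g ∈ Γ, f ∘ g ∈ Γ) {p q : Z → Z}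
    (hp : p ∈ closure Γ) (hq : q ∈ closure Γ) : p ∘ q ∈ closure Γ := by
  have step1 : Set.MapsTo (fun p : Z → Z => p ∘ q) Γ (closure Γ) := by
    intro g hg
    exact map_mem_closure (comp_left_cont (hc g hg)) hq (fun h hh => hΓ g hg h hh)
  have h2 := map_mem_closure (comp_right_cont q) hp step1
  rwa [closure_closure] at h2

lemma exists_idem_comp [T2Space Z] {K : Set (Z → Z)} (hK : IsCompact K) (hne : K.Nonempty)
    (hmul : ∀ f ∈ K, ∀ g ∈ K, f ∘ g ∈ K) : ∃ u ∈ K, u ∘ u = u := by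
  haveI : Nonempty K := hne.to_subtype
  letI sg : Semigroup K :=
    { mul := fun f g => ⟨f.1 ∘ g.1, hmul _ f.2 _ g.2⟩
      mul_assoc := fun a b c => Subtype.ext rfl }
  haveI : CompactSpace K := isCompact_iff_compactSpace.mp hK
  have hcont : ∀ r : K, Continuous fun x : K => x * r := fun r =>
    Continuous.subtype_mk ((comp_right_cont r.1).comp continuous_subtype_val) _
  obtain ⟨m, hm⟩ := exists_idempotent_of_compact_t2_of_continuous_mul_left hcont
  exact ⟨m.1, m.2, congrArg Subtype.val hm⟩

lemma ellis_inverse [CompactSpace Z] [T2Space Z] {Γ : Set (Z → Z)}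
    (hc : ∀ f ∈ Γ, Continuous f) (hΓ : ∀ f ∈ Γ, ∀ g ∈ Γ, f ∘ g ∈ Γ) (hid : id ∈ Γ)
    (hidem : ∀ u ∈ closure Γ, u ∘ u = u → u = id) :
    ∀ p ∈ closure Γ, ∃ q ∈ closure Γ, q ∘ p = id ∧ p ∘ q = id := by
  have hEc : IsCompact (closure Γ) := isClosed_closure.isCompact
  have hidE : (id : Z → Z) ∈ closure Γ := subset_closure hid
  have left : ∀ p ∈ closure Γ, ∃ q ∈ closure Γ, q ∘ p = id := by
    intro p hp
    have hKc : IsCompact ((fun u : Z → Z => u ∘ p) '' closure Γ) :=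
      hEc.image (comp_right_cont p)
    have hKne : ((fun u : Z → Z => u ∘ p) '' closure Γ).Nonempty :=
      ⟨id ∘ p, ⟨id, hidE, rfl⟩⟩
    have hsub : ((fun u : Z → Z => u ∘ p) '' closure Γ) ⊆ closure Γ := by
      rintro _ ⟨u, hu, rfl⟩
      exact closure_comp_mem hc hΓ hu hp
    have hKmul : ∀ f ∈ ((fun u : Z → Z => u ∘ p) '' closure Γ),
        ∀ g ∈ ((fun u : Z → Z => u ∘ p) '' closure Γ),
        f ∘ g ∈ ((fun u : Z → Z => u ∘ p) '' closure Γ) := by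
      rintro _ ⟨u, hu, rfl⟩ _ ⟨v, hv, rfl⟩
      exact ⟨u ∘ (p ∘ v),
        closure_comp_mem hc hΓ hu (closure_comp_mem hc hΓ hp hv), rfl⟩
    obtain ⟨w, hwK, hw⟩ := exists_idem_comp hKc hKne hKmul
    have hwid : w = id := hidem w (hsub hwK) hw
    obtain ⟨q, hq, hqp⟩ := hwK
    exact ⟨q, hq, hqp.trans hwid⟩
  intro p hp
  obtain ⟨q, hq, hqp⟩ := left p hp
  obtain ⟨r, hr, hrq⟩ := left q hq
  have hrp : r = p := by
    calc r = r ∘ (q ∘ p) := by rw [hqp]; rfl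
    _ = (r ∘ q) ∘ p := rfl
    _ = p := by rw [hrq]; rfl
  exact ⟨q, hq, hqp, by rw [← hrp]; exact hrq⟩

lemma idem_id {W : Type*} [MetricSpace W] {Γ : Set (W → W)}
    (hdist : ∀ z w : W, z ≠ w → ∃ ε > 0, ∀ γ ∈ Γ, ε ≤ dist (γ z) (γ w)) :
    ∀ u ∈ closure Γ, u ∘ u = u → u = id := by
  intro u hu huu
  funext z
  by_contra hne
  have hzne : z ≠ u z := fun h => hne h.symm
  obtain ⟨ε, hε, hεd⟩ := hdist z (u z) hzne
  have hcont : Continuous fun f : W → W => (f z, f (u z)) :=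
    (continuous_apply z).prodMk (continuous_apply (u z))
  have hmem : (u z, u (u z)) ∈ closure ((fun f : W → W => (f z, f (u z))) '' Γ) :=
    map_mem_closure (f := fun f : W → W => (f z, f (u z))) hcont hu (Set.mapsTo_image _ _)
  have huuz : u (u z) = u z := congrFun huu z
  rw [huuz, Metric.mem_closure_iff] at hmem
  obtain ⟨pt, hptm, hptd⟩ := hmem (ε/2) (by linarith)
  obtain ⟨γ, hγ, rfl⟩ := hptm
  have h1 : dist (u z) (γ z) < ε/2 :=
    lt_of_le_of_lt (by rw [Prod.dist_eq]; exact le_max_left _ _) hptd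
  have h2 : dist (u z) (γ (u z)) < ε/2 :=
    lt_of_le_of_lt (by rw [Prod.dist_eq]; exact le_max_right _ _) hptd
  have h3 := hεd γ hγ
  have h4 := dist_triangle (γ z) (u z) (γ (u z))
  have h5 := dist_comm (u z) (γ z)
  linarith

lemma realize_map [CompactSpace Z] [T2Space Z] (Γ : Set (Z → Z)) (z : Z) {w : Z}
    (hw : w ∈ closure ((fun γ : Z → Z => γ z) '' Γ)) : ∃ u ∈ closure Γ, u z = w := by
  have hcomp : IsCompact ((fun f : Z → Z => f z) '' closure Γ) :=
    (isClosed_closure.isCompact).image (continuous_apply z)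
  have hsub : closure ((fun γ : Z → Z => γ z) '' Γ) ⊆ (fun f : Z → Z => f z) '' closure Γ :=
    closure_minimal (Set.image_mono subset_closure) hcomp.isClosed
  obtain ⟨u, hu, huz⟩ := hsub hw
  exact ⟨u, hu, huz⟩

lemma apply_mem_closure {Γ : Set (Z → Z)} {u : Z → Z} (hu : u ∈ closure Γ) (z : Z) :
    u z ∈ closure ((fun γ : Z → Z => γ z) '' Γ) :=
  map_mem_closure (f := fun f : Z → Z => f z) (continuous_apply z) hu (Set.mapsTo_image _ _)

end Ellis

section CubeSetup

variable {X : Type*} [TopologicalSpace X]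

/-- `S^k T^l` as a plain map. -/
def sqm (S T : X ≃ₜ X) (k l : ℤ) : X → X := fun v => hpow S k (hpow T l v)

lemma sqm_cont (S T : X ≃ₜ X) (k l : ℤ) : Continuous (sqm S T k l) :=
  (continuous_hpow S k).comp (continuous_hpow T l)

lemma sqm_comp (S T : X ≃ₜ X) (hST : ∀ x, S (T x) = T (S x)) (k l k' l' : ℤ) (v : X) :
    sqm S T k l (sqm S T k' l' v) = sqm S T (k + k') (l + l') v := by
  unfold sqm
  rw [hpow_add_apply S k k', hpow_add_apply T l l',
    hpow_comm S T hST k' l (hpow T l' v)]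

lemma sqm_congr (S T : X ≃ₜ X) {a b a' b' : ℤ} (v : X) (h1 : a = a') (h2 : b = b') :
    sqm S T a b v = sqm S T a' b' v := by rw [h1, h2]

/-- generators of the cube -/
def genST (S T : X ≃ₜ X) : Set (X × X × X × X) :=
  {p | ∃ (x : X) (n m : ℤ),
    p = (x, hpow S n x, hpow T m x, hpow S n (hpow T m x))}

lemma cube_def (S T : X ≃ₜ X) : cube S T = closure (genST S T) := rfl

lemma genST_mem (S T : X ≃ₜ X) (v : X) (n m : ℤ) :
    (v, sqm S T n 0 v, sqm S T 0 m v, sqm S T n m v) ∈ genST S T := by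
  refine ⟨v, n, m, ?_⟩
  unfold sqm
  rw [hpow_zero_apply T v, hpow_zero_apply S (hpow T m v)]

lemma genST_elim (S T : X ≃ₜ X) {p : X × X × X × X} (hp : p ∈ genST S T) :
    ∃ (v : X) (n m : ℤ), p = (v, sqm S T n 0 v, sqm S T 0 m v, sqm S T n m v) := by
  obtain ⟨v, n, m, rfl⟩ := hp
  refine ⟨v, n, m, ?_⟩
  unfold sqm
  rw [hpow_zero_apply T v, hpow_zero_apply S (hpow T m v)]

/-- the acting maps on `X⁴` -/
def quad (S T : X ≃ₜ X) (k l n m : ℤ) : (X × X × X × X) → (X × X × X × X) :=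
  fun z => (sqm S T k l z.1, sqm S T (k + n) l z.2.1,
    sqm S T k (l + m) z.2.2.1, sqm S T (k + n) (l + m) z.2.2.2)

def Gam4 (S T : X ≃ₜ X) : Set ((X × X × X × X) → (X × X × X × X)) :=
  {f | ∃ k l n m : ℤ, f = quad S T k l n m}

lemma quad_cont (S T : X ≃ₜ X) (k l n m : ℤ) : Continuous (quad S T k l n m) := by
  unfold quad
  exact ((sqm_cont S T k l).comp continuous_fst).prodMk
    ((((sqm_cont S T (k + n) l).comp (continuous_fst.comp continuous_snd))).prodMk
      ((((sqm_cont S T k (l + m)).comp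
        (continuous_fst.comp (continuous_snd.comp continuous_snd)))).prodMk
        (((sqm_cont S T (k + n) (l + m)).comp
          (continuous_snd.comp (continuous_snd.comp continuous_snd))))))

lemma Gam4_cont (S T : X ≃ₜ X) : ∀ f ∈ Gam4 S T, Continuous f := by
  rintro f ⟨k, l, n, m, rfl⟩; exact quad_cont S T k l n m

lemma Gam4_id (S T : X ≃ₜ X) : id ∈ Gam4 S T := by
  refine ⟨0, 0, 0, 0, ?_⟩
  funext z
  show z = quad S T 0 0 0 0 z
  unfold quad sqm
  simp [hpow_zero_apply]

lemma Gam4_comp (S T : X ≃ₜ X) (hST : ∀ x, S (T x) = T (S x)) :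
    ∀ f ∈ Gam4 S T, ∀ g ∈ Gam4 S T, f ∘ g ∈ Gam4 S T := by
  rintro _ ⟨k, l, n, m, rfl⟩ _ ⟨k', l', n', m', rfl⟩
  refine ⟨k + k', l + l', n + n', m + m', ?_⟩
  funext z
  show quad S T k l n m (quad S T k' l' n' m' z) = _
  unfold quad
  refine Prod.ext ?_ (Prod.ext ?_ (Prod.ext ?_ ?_)) <;>
    · show sqm S T _ _ (sqm S T _ _ _) = _
      rw [sqm_comp S T hST]
      try exact sqm_congr S T _ (by ring) (by ring)

lemma Gam4_maps_gen (S T : X ≃ₜ X) (hST : ∀ x, S (T x) = T (S x)) {f} (hf : f ∈ Gam4 S T) :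
    Set.MapsTo f (genST S T) (genST S T) := by
  obtain ⟨k, l, n, m, rfl⟩ := hf
  intro p hp
  obtain ⟨v, n', m', rfl⟩ := genST_elim S T hp
  have : quad S T k l n m (v, sqm S T n' 0 v, sqm S T 0 m' v, sqm S T n' m' v)
      = (sqm S T k l v, sqm S T (n + n') 0 (sqm S T k l v),
         sqm S T 0 (m + m') (sqm S T k l v), sqm S T (n + n') (m + m') (sqm S T k l v)) := by
    unfold quad
    refine Prod.ext rfl (Prod.ext ?_ (Prod.ext ?_ ?_)) <;>
      · show sqm S T _ _ (sqm S T _ _ _) = sqm S T _ _ (sqm S T _ _ _)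
        rw [sqm_comp S T hST, sqm_comp S T hST]
        exact sqm_congr S T _ (by ring) (by ring)
  rw [this]
  exact genST_mem S T (sqm S T k l v) (n + n') (m + m')

lemma Gam4_invar (S T : X ≃ₜ X) (hST : ∀ x, S (T x) = T (S x)) {f} (hf : f ∈ Gam4 S T)
    {w} (hw : w ∈ cube S T) : f w ∈ cube S T :=
  map_mem_closure (Gam4_cont S T f hf) hw (Gam4_maps_gen S T hST hf)

lemma Ep_invar (S T : X ≃ₜ X) (hST : ∀ x, S (T x) = T (S x)) {u} (hu : u ∈ closure (Gam4 S T))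
    {w} (hw : w ∈ cube S T) : u w ∈ cube S T := by
  have h1 := apply_mem_closure hu w
  have h2 : ((fun γ : (X × X × X × X) → (X × X × X × X) => γ w) '' Gam4 S T) ⊆ cube S T := by
    rintro _ ⟨γ, hγ, rfl⟩
    exact Gam4_invar S T hST hγ hw
  have h3 := closure_mono h2 h1
  have hcl : IsClosed (cube S T) := isClosed_closure
  rwa [hcl.closure_eq] at h3

end CubeSetup

section CubeMore

variable {X : Type*} [TopologicalSpace X]

lemma quad_diag (S T : X ≃ₜ X) (hST : ∀ x, S (T x) = T (S x)) (k l n m : ℤ) (z : X) :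
    quad S T k l n m (z, z, z, z)
      = (sqm S T k l z, sqm S T n 0 (sqm S T k l z), sqm S T 0 m (sqm S T k l z),
          sqm S T n m (sqm S T k l z)) := by
  unfold quad
  refine Prod.ext rfl (Prod.ext ?_ (Prod.ext ?_ ?_)) <;>
    · show sqm S T _ _ _ = sqm S T _ _ (sqm S T _ _ _)
      rw [sqm_comp S T hST]
      try exact sqm_congr S T _ (by ring) (by ring)

lemma cube_eq (S T : X ≃ₜ X) (hST : ∀ x, S (T x) = T (S x)) (hmin : minimalST S T) (z : X) :
    cube S T
      = closure ((fun γ : (X × X × X × X) → (X × X × X × X) => γ (z, z, z, z)) '' Gam4 S T) := by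
  apply le_antisymm
  · rw [cube_def]
    apply closure_minimal ?_ isClosed_closure
    intro p hp
    obtain ⟨v, n, m, rfl⟩ := genST_elim S T hp
    have hcont : Continuous (fun w : X => (w, sqm S T n 0 w, sqm S T 0 m w, sqm S T n m w)) :=
      continuous_id.prodMk ((sqm_cont S T n 0).prodMk
        ((sqm_cont S T 0 m).prodMk (sqm_cont S T n m)))
    have hvmem : v ∈ closure {y : X | ∃ k l : ℤ, y = hpow S k (hpow T l z)} := by
      rw [(hmin z).closure_eq]; trivial
    have hmaps : Set.MapsTo (fun w : X => (w, sqm S T n 0 w, sqm S T 0 m w, sqm S T n m w))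
        {y : X | ∃ k l : ℤ, y = hpow S k (hpow T l z)}
        ((fun γ : (X × X × X × X) → (X × X × X × X) => γ (z, z, z, z)) '' Gam4 S T) := by
      rintro _ ⟨k, l, rfl⟩
      refine ⟨quad S T k l n m, ⟨k, l, n, m, rfl⟩, ?_⟩
      exact (quad_diag S T hST k l n m z)
    exact map_mem_closure (f := fun w : X => (w, sqm S T n 0 w, sqm S T 0 m w, sqm S T n m w)) hcont hvmem hmaps
  · rw [cube_def]
    apply closure_mono
    rintro _ ⟨γ, ⟨k, l, n, m, rfl⟩, rfl⟩
    show quad S T k l n m (z, z, z, z) ∈ genST S T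
    rw [quad_diag S T hST k l n m z]
    exact genST_mem S T (sqm S T k l z) n m

lemma realize4 (S T : X ≃ₜ X) (hST : ∀ x, S (T x) = T (S x)) (hmin : minimalST S T) (z : X)
    {w : X × X × X × X} (hw : w ∈ cube S T) [CompactSpace X] [T2Space X] :
    ∃ u ∈ closure (Gam4 S T), u (z, z, z, z) = w := by
  apply realize_map
  rwa [cube_eq S T hST hmin z] at hw

end CubeMore

section Components

variable {X : Type*} [TopologicalSpace X] [T2Space X]

def cmp1 (u : (X × X × X × X) → (X × X × X × X)) : X → X := fun v => (u (v, v, v, v)).1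
def cmp2 (u : (X × X × X × X) → (X × X × X × X)) : X → X := fun v => (u (v, v, v, v)).2.1
def cmp3 (u : (X × X × X × X) → (X × X × X × X)) : X → X := fun v => (u (v, v, v, v)).2.2.1
def cmp4 (u : (X × X × X × X) → (X × X × X × X)) : X → X := fun v => (u (v, v, v, v)).2.2.2

/-- every element of the enveloping semigroup acts coordinatewise -/
lemma prodp (S T : X ≃ₜ X) {u} (hu : u ∈ closure (Gam4 S T)) (z1 z2 z3 z4 : X) :
    u (z1, z2, z3, z4) = (cmp1 u z1, cmp2 u z2, cmp3 u z3, cmp4 u z4) := by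
  have hsub : closure (Gam4 S T) ⊆
      {u : (X × X × X × X) → (X × X × X × X) |
        u (z1, z2, z3, z4) = (cmp1 u z1, cmp2 u z2, cmp3 u z3, cmp4 u z4)} := by
    apply closure_minimal
    · rintro _ ⟨k, l, n, m, rfl⟩
      rfl
    · apply isClosed_eq
      · exact continuous_apply (z1, z2, z3, z4)
      · refine Continuous.prodMk ?_ (Continuous.prodMk ?_ (Continuous.prodMk ?_ ?_))
        · exact (continuous_apply (z1, z1, z1, z1)).fst
        · exact (continuous_apply (z2, z2, z2, z2)).snd.fst
        · exact (continuous_apply (z3, z3, z3, z3)).snd.snd.fst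
        · exact (continuous_apply (z4, z4, z4, z4)).snd.snd.snd
  exact hsub hu

/-- relations coming from `u ∘ w = id`, componentwise -/
lemma inv_rels (S T : X ≃ₜ X) {u w} (hu : u ∈ closure (Gam4 S T))
    (hw : w ∈ closure (Gam4 S T)) (h : u ∘ w = id) (v : X) :
    cmp1 u (cmp1 w v) = v ∧ cmp2 u (cmp2 w v) = v ∧
      cmp3 u (cmp3 w v) = v ∧ cmp4 u (cmp4 w v) = v := by
  have h1 : u (w (v, v, v, v)) = (v, v, v, v) := congrFun h (v, v, v, v)
  rw [prodp S T hw v v v v, prodp S T hu] at h1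
  simp only [Prod.mk.injEq] at h1
  exact ⟨h1.1, h1.2.1, h1.2.2.1, h1.2.2.2⟩

/-- the S-side pattern operator: coordinates (1,2) duplicated -/
def op12 (u : (X × X × X × X) → (X × X × X × X)) : (X × X × X × X) → (X × X × X × X) :=
  fun z => ((u (z.1, z.2.1, z.1, z.2.1)).1, (u (z.1, z.2.1, z.1, z.2.1)).2.1,
    (u (z.2.2.1, z.2.2.2, z.2.2.1, z.2.2.2)).1, (u (z.2.2.1, z.2.2.2, z.2.2.1, z.2.2.2)).2.1)

def op34 (u : (X × X × X × X) → (X × X × X × X)) : (X × X × X × X) → (X × X × X × X) :=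
  fun z => ((u (z.1, z.2.1, z.1, z.2.1)).2.2.1, (u (z.1, z.2.1, z.1, z.2.1)).2.2.2,
    (u (z.2.2.1, z.2.2.2, z.2.2.1, z.2.2.2)).2.2.1, (u (z.2.2.1, z.2.2.2, z.2.2.1, z.2.2.2)).2.2.2)

def opDiag (u : (X × X × X × X) → (X × X × X × X)) : (X × X × X × X) → (X × X × X × X) :=
  fun z => ((u (z.1, z.1, z.1, z.1)).1, (u (z.2.1, z.2.1, z.2.1, z.2.1)).1,
    (u (z.2.2.1, z.2.2.1, z.2.2.1, z.2.2.1)).1, (u (z.2.2.2, z.2.2.2, z.2.2.2, z.2.2.2)).1)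

lemma op12_mem (S T : X ≃ₜ X) {u} (hu : u ∈ closure (Gam4 S T)) :
    op12 u ∈ closure (Gam4 S T) := by
  have hcont : Continuous (op12 : ((X × X × X × X) → (X × X × X × X)) → _) := by
    apply continuous_pi
    intro z
    refine Continuous.prodMk ?_ (Continuous.prodMk ?_ (Continuous.prodMk ?_ ?_))
    · exact (continuous_apply (z.1, z.2.1, z.1, z.2.1)).fst
    · exact (continuous_apply (z.1, z.2.1, z.1, z.2.1)).snd.fst
    · exact (continuous_apply (z.2.2.1, z.2.2.2, z.2.2.1, z.2.2.2)).fst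
    · exact (continuous_apply (z.2.2.1, z.2.2.2, z.2.2.1, z.2.2.2)).snd.fst
  have hmaps : Set.MapsTo op12 (Gam4 S T) (Gam4 S T) := by
    rintro _ ⟨k, l, n, m, rfl⟩
    refine ⟨k, l, n, 0, ?_⟩
    funext z
    show _ = quad S T k l n 0 z
    unfold op12 quad
    refine Prod.ext rfl (Prod.ext rfl (Prod.ext ?_ ?_)) <;>
      exact sqm_congr S T _ rfl (by ring)
  exact map_mem_closure hcont hu hmaps

lemma op34_mem (S T : X ≃ₜ X) {u} (hu : u ∈ closure (Gam4 S T)) :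
    op34 u ∈ closure (Gam4 S T) := by
  have hcont : Continuous (op34 : ((X × X × X × X) → (X × X × X × X)) → _) := by
    apply continuous_pi
    intro z
    refine Continuous.prodMk ?_ (Continuous.prodMk ?_ (Continuous.prodMk ?_ ?_))
    · exact (continuous_apply (z.1, z.2.1, z.1, z.2.1)).snd.snd.fst
    · exact (continuous_apply (z.1, z.2.1, z.1, z.2.1)).snd.snd.snd
    · exact (continuous_apply (z.2.2.1, z.2.2.2, z.2.2.1, z.2.2.2)).snd.snd.fst
    · exact (continuous_apply (z.2.2.1, z.2.2.2, z.2.2.1, z.2.2.2)).snd.snd.snd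
  have hmaps : Set.MapsTo op34 (Gam4 S T) (Gam4 S T) := by
    rintro _ ⟨k, l, n, m, rfl⟩
    refine ⟨k, l + m, n, 0, ?_⟩
    funext z
    show _ = quad S T k (l + m) n 0 z
    unfold op34 quad
    refine Prod.ext rfl (Prod.ext rfl (Prod.ext ?_ ?_)) <;>
      exact sqm_congr S T _ rfl (by ring)
  exact map_mem_closure hcont hu hmaps

lemma opDiag_mem (S T : X ≃ₜ X) {u} (hu : u ∈ closure (Gam4 S T)) :
    opDiag u ∈ closure (Gam4 S T) := by
  have hcont : Continuous (opDiag : ((X × X × X × X) → (X × X × X × X)) → _) := by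
    apply continuous_pi
    intro z
    refine Continuous.prodMk ?_ (Continuous.prodMk ?_ (Continuous.prodMk ?_ ?_))
    · exact (continuous_apply (z.1, z.1, z.1, z.1)).fst
    · exact (continuous_apply (z.2.1, z.2.1, z.2.1, z.2.1)).fst
    · exact (continuous_apply (z.2.2.1, z.2.2.1, z.2.2.1, z.2.2.1)).fst
    · exact (continuous_apply (z.2.2.2, z.2.2.2, z.2.2.2, z.2.2.2)).fst
  have hmaps : Set.MapsTo opDiag (Gam4 S T) (Gam4 S T) := by
    rintro _ ⟨k, l, n, m, rfl⟩
    refine ⟨k, l, 0, 0, ?_⟩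
    funext z
    show _ = quad S T k l 0 0 z
    unfold opDiag quad
    refine Prod.ext rfl (Prod.ext ?_ (Prod.ext ?_ ?_)) <;>
      exact sqm_congr S T _ (by ring) (by ring)
  exact map_mem_closure hcont hu hmaps

end Components

section Symmetries

variable {X : Type*} [TopologicalSpace X]

lemma sqm_zero (S T : X ≃ₜ X) (v : X) : sqm S T 0 0 v = v := by
  unfold sqm; rw [hpow_zero_apply, hpow_zero_apply]

lemma sqm_swap (S T : X ≃ₜ X) (hST : ∀ x, S (T x) = T (S x)) (n m : ℤ) (v : X) :
    sqm T S m n v = sqm S T n m v :=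
  (hpow_comm S T hST n m v).symm

lemma cube_sigma (S T : X ≃ₜ X) (hST : ∀ x, S (T x) = T (S x))
    {z : X × X × X × X} (hz : z ∈ cube S T) :
    (z.2.2.1, z.2.2.2, z.1, z.2.1) ∈ cube S T := by
  refine map_mem_closure (f := fun z : X × X × X × X => (z.2.2.1, z.2.2.2, z.1, z.2.1))
    ?_ hz ?_
  · exact (continuous_fst.comp (continuous_snd.comp continuous_snd)).prodMk
      (((continuous_snd.comp (continuous_snd.comp continuous_snd))).prodMk
        (continuous_fst.prodMk (continuous_fst.comp continuous_snd)))
  · intro p hp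
    obtain ⟨v, n, m, rfl⟩ := genST_elim S T hp
    show (sqm S T 0 m v, sqm S T n m v, v, sqm S T n 0 v) ∈ genST S T
    have h := genST_mem S T (sqm S T 0 m v) n (-m)
    have e1 : sqm S T n 0 (sqm S T 0 m v) = sqm S T n m v := by
      rw [sqm_comp S T hST]; exact sqm_congr S T _ (by ring) (by ring)
    have e2 : sqm S T 0 (-m) (sqm S T 0 m v) = v := by
      rw [sqm_comp S T hST]
      have : (0 : ℤ) + 0 = 0 := by ring
      rw [sqm_congr S T v (show (0:ℤ) + 0 = 0 by ring) (show -m + m = 0 by ring), sqm_zero]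
    have e3 : sqm S T n (-m) (sqm S T 0 m v) = sqm S T n 0 v := by
      rw [sqm_comp S T hST]; exact sqm_congr S T _ (by ring) (by ring)
    rwa [e1, e2, e3] at h
  
lemma cube_tau (S T : X ≃ₜ X) (hST : ∀ x, S (T x) = T (S x))
    {z : X × X × X × X} (hz : z ∈ cube S T) :
    (z.2.1, z.1, z.2.2.2, z.2.2.1) ∈ cube S T := by
  refine map_mem_closure (f := fun z : X × X × X × X => (z.2.1, z.1, z.2.2.2, z.2.2.1))
    ?_ hz ?_
  · exact (continuous_fst.comp continuous_snd).prodMk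
      (continuous_fst.prodMk
        ((continuous_snd.comp (continuous_snd.comp continuous_snd)).prodMk
          (continuous_fst.comp (continuous_snd.comp continuous_snd))))
  · intro p hp
    obtain ⟨v, n, m, rfl⟩ := genST_elim S T hp
    show (sqm S T n 0 v, v, sqm S T n m v, sqm S T 0 m v) ∈ genST S T
    have h := genST_mem S T (sqm S T n 0 v) (-n) m
    have e1 : sqm S T (-n) 0 (sqm S T n 0 v) = v := by
      rw [sqm_comp S T hST]
      rw [sqm_congr S T v (show -n + n = 0 by ring) (show (0:ℤ) + 0 = 0 by ring), sqm_zero]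
    have e2 : sqm S T 0 m (sqm S T n 0 v) = sqm S T n m v := by
      rw [sqm_comp S T hST]; exact sqm_congr S T _ (by ring) (by ring)
    have e3 : sqm S T (-n) m (sqm S T n 0 v) = sqm S T 0 m v := by
      rw [sqm_comp S T hST]; exact sqm_congr S T _ (by ring) (by ring)
    rwa [e1, e2, e3] at h

lemma cube_kappa (S T : X ≃ₜ X)
    {z : X × X × X × X} (hz : z ∈ cube S T) :
    (z.1, z.1, z.2.2.1, z.2.2.1) ∈ cube S T := by
  refine map_mem_closure (f := fun z : X × X × X × X => (z.1, z.1, z.2.2.1, z.2.2.1))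
    ?_ hz ?_
  · exact continuous_fst.prodMk (continuous_fst.prodMk
      ((continuous_fst.comp (continuous_snd.comp continuous_snd)).prodMk
        (continuous_fst.comp (continuous_snd.comp continuous_snd))))
  · intro p hp
    obtain ⟨v, n, m, rfl⟩ := genST_elim S T hp
    show (v, v, sqm S T 0 m v, sqm S T 0 m v) ∈ genST S T
    have h := genST_mem S T v 0 m
    rwa [show sqm S T 0 0 v = v from sqm_zero S T v] at h

lemma cube_swap23 (S T : X ≃ₜ X) (hST : ∀ x, S (T x) = T (S x))
    {z : X × X × X × X} (hz : z ∈ cube S T) :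
    (z.1, z.2.2.1, z.2.1, z.2.2.2) ∈ cube T S := by
  refine map_mem_closure (f := fun z : X × X × X × X => (z.1, z.2.2.1, z.2.1, z.2.2.2))
    ?_ hz ?_
  · exact continuous_fst.prodMk
      ((continuous_fst.comp (continuous_snd.comp continuous_snd)).prodMk
        ((continuous_fst.comp continuous_snd).prodMk
          (continuous_snd.comp (continuous_snd.comp continuous_snd))))
  · intro p hp
    obtain ⟨v, n, m, rfl⟩ := genST_elim S T hp
    show (v, sqm S T 0 m v, sqm S T n 0 v, sqm S T n m v) ∈ genST T S
    have h := genST_mem T S v m n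
    have e1 : sqm T S m 0 v = sqm S T 0 m v := by
      rw [sqm_swap S T hST]
    have e2 : sqm T S 0 n v = sqm S T n 0 v := by
      rw [sqm_swap S T hST]
    have e3 : sqm T S m n v = sqm S T n m v := sqm_swap S T hST n m v
    rwa [e1, e2, e3] at h

end Symmetries

section Distal

variable {X : Type*} [MetricSpace X] [CompactSpace X]

lemma dist_coord1 (z w : X × X × X × X) : dist z.1 w.1 ≤ dist z w := by
  rw [Prod.dist_eq]; exact le_max_left _ _

lemma dist_coord2 (z w : X × X × X × X) : dist z.2.1 w.2.1 ≤ dist z w := by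
  calc dist z.2.1 w.2.1 ≤ dist z.2 w.2 := by rw [Prod.dist_eq]; exact le_max_left _ _
  _ ≤ dist z w := by rw [Prod.dist_eq]; exact le_max_right _ _

lemma dist_coord3 (z w : X × X × X × X) : dist z.2.2.1 w.2.2.1 ≤ dist z w := by
  calc dist z.2.2.1 w.2.2.1 ≤ dist z.2.2 w.2.2 := by
        rw [Prod.dist_eq]; exact le_max_left _ _
  _ ≤ dist z.2 w.2 := by rw [Prod.dist_eq]; exact le_max_right _ _
  _ ≤ dist z w := by rw [Prod.dist_eq]; exact le_max_right _ _

lemma dist_coord4 (z w : X × X × X × X) : dist z.2.2.2 w.2.2.2 ≤ dist z w := by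
  calc dist z.2.2.2 w.2.2.2 ≤ dist z.2.2 w.2.2 := by
        rw [Prod.dist_eq]; exact le_max_right _ _
  _ ≤ dist z.2 w.2 := by rw [Prod.dist_eq]; exact le_max_right _ _
  _ ≤ dist z w := by rw [Prod.dist_eq]; exact le_max_right _ _

lemma sqm_dist (S T : X ≃ₜ X) (hd : distalST S T) {a b : X} (hab : a ≠ b) :
    ∃ ε > 0, ∀ k l : ℤ, ε ≤ dist (sqm S T k l a) (sqm S T k l b) := by
  obtain ⟨ε, hε, h⟩ := hd a b hab
  exact ⟨ε, hε, fun k l => h k l⟩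

lemma hdist4 (S T : X ≃ₜ X) (hd : distalST S T) :
    ∀ z w : X × X × X × X, z ≠ w →
      ∃ ε > 0, ∀ γ ∈ Gam4 S T, ε ≤ dist (γ z) (γ w) := by
  intro z w hzw
  have hcase : z.1 ≠ w.1 ∨ z.2.1 ≠ w.2.1 ∨ z.2.2.1 ≠ w.2.2.1 ∨ z.2.2.2 ≠ w.2.2.2 := by
    by_contra hcon
    push_neg at hcon
    obtain ⟨h1, h2, h3, h4⟩ := hcon
    apply hzw
    exact Prod.ext h1 (Prod.ext h2 (Prod.ext h3 h4))
  rcases hcase with h | h | h | h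
  · obtain ⟨ε, hε, hl⟩ := sqm_dist S T hd h
    refine ⟨ε, hε, ?_⟩
    rintro _ ⟨k, l, n, m, rfl⟩
    exact le_trans (hl k l) (dist_coord1 (quad S T k l n m z) (quad S T k l n m w))
  · obtain ⟨ε, hε, hl⟩ := sqm_dist S T hd h
    refine ⟨ε, hε, ?_⟩
    rintro _ ⟨k, l, n, m, rfl⟩
    exact le_trans (hl (k + n) l) (dist_coord2 (quad S T k l n m z) (quad S T k l n m w))
  · obtain ⟨ε, hε, hl⟩ := sqm_dist S T hd h
    refine ⟨ε, hε, ?_⟩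
    rintro _ ⟨k, l, n, m, rfl⟩
    exact le_trans (hl k (l + m)) (dist_coord3 (quad S T k l n m z) (quad S T k l n m w))
  · obtain ⟨ε, hε, hl⟩ := sqm_dist S T hd h
    refine ⟨ε, hε, ?_⟩
    rintro _ ⟨k, l, n, m, rfl⟩
    exact le_trans (hl (k + n) (l + m)) (dist_coord4 (quad S T k l n m z) (quad S T k l n m w))

/-- the enveloping semigroup of the cube system is a group -/
lemma Gam4_group (S T : X ≃ₜ X) (hST : ∀ x, S (T x) = T (S x)) (hd : distalST S T) :
    ∀ p ∈ closure (Gam4 S T), ∃ q ∈ closure (Gam4 S T), q ∘ p = id ∧ p ∘ q = id := by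
  apply ellis_inverse (Gam4_cont S T) (Gam4_comp S T hST) (Gam4_id S T)
  exact idem_id (hdist4 S T hd)

end Distal

section KeyLemma

variable {X : Type*} [MetricSpace X] [CompactSpace X]

lemma cmp_comp (S T : X ≃ₜ X) {u : (X × X × X × X) → (X × X × X × X)}
    (hu : u ∈ closure (Gam4 S T)) (w : (X × X × X × X) → (X × X × X × X)) (v : X) :
    cmp1 (u ∘ w) v = cmp1 u (cmp1 w v) ∧ cmp2 (u ∘ w) v = cmp2 u (cmp2 w v) ∧
      cmp3 (u ∘ w) v = cmp3 u (cmp3 w v) ∧ cmp4 (u ∘ w) v = cmp4 u (cmp4 w v) := by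
  have hwv : w (v, v, v, v) = (cmp1 w v, cmp2 w v, cmp3 w v, cmp4 w v) := rfl
  have h := prodp S T hu (cmp1 w v) (cmp2 w v) (cmp3 w v) (cmp4 w v)
  refine ⟨?_, ?_, ?_, ?_⟩
  · show (u (w (v, v, v, v))).1 = _
    rw [hwv, h]
  · show (u (w (v, v, v, v))).2.1 = _
    rw [hwv, h]
  · show (u (w (v, v, v, v))).2.2.1 = _
    rw [hwv, h]
  · show (u (w (v, v, v, v))).2.2.2 = _
    rw [hwv, h]

lemma key_lemma (S T : X ≃ₜ X) (hST : ∀ x, S (T x) = T (S x)) (hmin : minimalST S T)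
    (hd : distalST S T) {x y a : X} (h : (x, y, a, a) ∈ cube S T) :
    (x, y, y, y) ∈ cube S T := by
  -- step 1 : (a,a,x,y) ∈ cube
  have h1 : (a, a, x, y) ∈ cube S T := cube_sigma S T hST h
  -- step 2 : realize Θ with Θ(a,a,a,a) = (a,a,x,y)
  obtain ⟨Θ, hΘ, hΘval⟩ := realize4 S T hST hmin a h1
  have hp2 : cmp1 Θ a = a := by show (Θ (a, a, a, a)).1 = a; rw [hΘval]
  have hq2 : cmp2 Θ a = a := by show (Θ (a, a, a, a)).2.1 = a; rw [hΘval]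
  have hr2 : cmp3 Θ a = x := by show (Θ (a, a, a, a)).2.2.1 = x; rw [hΘval]
  have hw2 : cmp4 Θ a = y := by show (Θ (a, a, a, a)).2.2.2 = y; rw [hΘval]
  -- step 3 : Ω = (p₂,q₂,p₂,q₂) and its inverse
  set Ω := op12 Θ with hΩdef
  have hΩ : Ω ∈ closure (Gam4 S T) := op12_mem S T hΘ
  obtain ⟨Ω', hΩ', hΩ'Ω, hΩΩ'⟩ := Gam4_group S T hST hd Ω hΩ
  -- step 4 : Ξ = Θ ∘ Ω' maps (x,x,a,a) to (x,x,x,y)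
  have hΞ : Θ ∘ Ω' ∈ closure (Gam4 S T) := closure_comp_mem (Gam4_cont S T) (Gam4_comp S T hST) hΘ hΩ'
  have hxxaa : (x, x, a, a) ∈ cube S T := cube_kappa S T h
  have hval1 : (Θ ∘ Ω') (x, x, a, a) = (x, x, x, y) := by
    show Θ (Ω' (x, x, a, a)) = (x, x, x, y)
    rw [prodp S T hΩ' x x a a, prodp S T hΘ]
    have c1 : cmp1 Θ (cmp1 Ω' x) = x := (inv_rels S T hΩ hΩ' hΩΩ' x).1
    have c2 : cmp2 Θ (cmp2 Ω' x) = x := (inv_rels S T hΩ hΩ' hΩΩ' x).2.1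
    have e3 : cmp3 Ω' a = a := by
      have h0 := (inv_rels S T hΩ' hΩ hΩ'Ω a).2.2.1
      rwa [show cmp3 Ω a = a from hp2] at h0
    have e4 : cmp4 Ω' a = a := by
      have h0 := (inv_rels S T hΩ' hΩ hΩ'Ω a).2.2.2
      rwa [show cmp4 Ω a = a from hq2] at h0
    have c3 : cmp3 Θ (cmp3 Ω' a) = x := by rw [e3]; exact hr2
    have c4 : cmp4 Θ (cmp4 Ω' a) = y := by rw [e4]; exact hw2
    exact Prod.ext c1 (Prod.ext c2 (Prod.ext c3 c4))
  have h2 : (x, x, x, y) ∈ cube S T := by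
    rw [← hval1]; exact Ep_invar S T hST hΞ hxxaa
  -- step 5 : (x,x,y,x) ∈ cube by the τ symmetry
  have h3 : (x, x, y, x) ∈ cube S T := cube_tau S T hST h2
  -- step 6 : realize G with G(x,x,x,x) = (x,x,x,y)
  obtain ⟨G, hG, hGval⟩ := realize4 S T hST hmin x h2
  have hp4 : cmp1 G x = x := by show (G (x, x, x, x)).1 = x; rw [hGval]
  have hq4 : cmp2 G x = x := by show (G (x, x, x, x)).2.1 = x; rw [hGval]
  have hr4 : cmp3 G x = x := by show (G (x, x, x, x)).2.2.1 = x; rw [hGval]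
  have hw4 : cmp4 G x = y := by show (G (x, x, x, x)).2.2.2 = y; rw [hGval]
  -- step 7 : patterns A = (p₄,q₄,p₄,q₄), B = (r₄,w₄,r₄,w₄)
  set A := op12 G with hAdef
  set B := op34 G with hBdef
  have hA : A ∈ closure (Gam4 S T) := op12_mem S T hG
  have hB : B ∈ closure (Gam4 S T) := op34_mem S T hG
  obtain ⟨A', hA', hA'A, hAA'⟩ := Gam4_group S T hST hd A hA
  set Ψ₀ := B ∘ A' with hΨ₀def
  have hΨ₀ : Ψ₀ ∈ closure (Gam4 S T) := closure_comp_mem (Gam4_cont S T) (Gam4_comp S T hST) hB hA'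
  -- A' has equal 1st/3rd and 2nd/4th components
  have e13 : ∀ v, cmp3 A' v = cmp1 A' v := by
    intro v
    have h1' : cmp1 A (cmp1 A' v) = v := (inv_rels S T hA hA' hAA' v).1
    have h2' := (inv_rels S T hA' hA hA'A (cmp1 A' v)).2.2.1
    rwa [show cmp3 A (cmp1 A' v) = v from h1'] at h2'
  have e24 : ∀ v, cmp4 A' v = cmp2 A' v := by
    intro v
    have h1' : cmp2 A (cmp2 A' v) = v := (inv_rels S T hA hA' hAA' v).2.1
    have h2' := (inv_rels S T hA' hA hA'A (cmp2 A' v)).2.2.2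
    rwa [show cmp4 A (cmp2 A' v) = v from h1'] at h2'
  -- values of Ψ₀
  have hα : cmp1 Ψ₀ x = x := by
    have hc := (cmp_comp S T hB A' x).1
    have hx1 : cmp1 A' x = x := by
      have h0 := (inv_rels S T hA' hA hA'A x).1
      rwa [show cmp1 A x = x from hp4] at h0
    rw [hc, hx1]
    exact hr4
  have hβ : cmp2 Ψ₀ x = y := by
    have hc := (cmp_comp S T hB A' x).2.1
    have hx1 : cmp2 A' x = x := by
      have h0 := (inv_rels S T hA' hA hA'A x).2.1
      rwa [show cmp2 A x = x from hq4] at h0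
    rw [hc, hx1]
    exact hw4
  have eΨ13 : ∀ v, cmp3 Ψ₀ v = cmp1 Ψ₀ v := by
    intro v
    have hc3 := (cmp_comp S T hB A' v).2.2.1
    have hc1 := (cmp_comp S T hB A' v).1
    rw [hc3, hc1, e13 v]
    rfl
  have hΨ₀4 : cmp4 Ψ₀ x = y := by
    have hc := (cmp_comp S T hB A' x).2.2.2
    have hx1 : cmp2 A' x = x := by
      have h0 := (inv_rels S T hA' hA hA'A x).2.1
      rwa [show cmp2 A x = x from hq4] at h0
    rw [hc, e24 x, hx1]
    exact hw4
  -- step 8 : the diagonal of Ψ₀ and its inverse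
  set Dg := opDiag Ψ₀ with hDgdef
  have hDg : Dg ∈ closure (Gam4 S T) := opDiag_mem S T hΨ₀
  obtain ⟨Dg', hDg', hDg'Dg, hDgDg'⟩ := Gam4_group S T hST hd Dg hDg
  set Ψ := Ψ₀ ∘ Dg' with hΨdef
  have hΨ : Ψ ∈ closure (Gam4 S T) := closure_comp_mem (Gam4_cont S T) (Gam4_comp S T hST) hΨ₀ hDg'
  have hval2 : Ψ (x, x, y, x) = (x, y, y, y) := by
    show Ψ₀ (Dg' (x, x, y, x)) = (x, y, y, y)
    rw [prodp S T hDg' x x y x, prodp S T hΨ₀]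
    have d1 : cmp1 Dg' x = x := by
      have h0 := (inv_rels S T hDg' hDg hDg'Dg x).1
      rwa [show cmp1 Dg x = x from hα] at h0
    have d2 : cmp2 Dg' x = x := by
      have h0 := (inv_rels S T hDg' hDg hDg'Dg x).2.1
      rwa [show cmp2 Dg x = x from hα] at h0
    have d4 : cmp4 Dg' x = x := by
      have h0 := (inv_rels S T hDg' hDg hDg'Dg x).2.2.2
      rwa [show cmp4 Dg x = x from hα] at h0
    have k1 : cmp1 Ψ₀ (cmp1 Dg' x) = x := by rw [d1]; exact hα
    have k2 : cmp2 Ψ₀ (cmp2 Dg' x) = y := by rw [d2]; exact hβ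
    have k3 : cmp3 Ψ₀ (cmp3 Dg' y) = y := by
      rw [eΨ13]
      exact (inv_rels S T hDg hDg' hDgDg' y).2.2.1
    have k4 : cmp4 Ψ₀ (cmp4 Dg' x) = y := by rw [d4]; exact hΨ₀4
    exact Prod.ext k1 (Prod.ext k2 (Prod.ext k3 k4))
  rw [← hval2]
  exact Ep_invar S T hST hΨ h3

end KeyLemma

theorem stmt11 {X : Type*} [MetricSpace X] [CompactSpace X] (S T : X ≃ₜ X)
    (hST : ∀ x, S (T x) = T (S x)) (hmin : minimalST S T) (hd : distalST S T) :
    (∀ x y : X, (((x, y, y, y) ∈ cube S T) ↔ (x, y) ∈ relS S T) ∧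
      (((x, y, y, y) ∈ cube S T) ↔ (x, y) ∈ relT S T)) ∧
    relS S T = relT S T ∧ relS S T = relS S T ∩ relT S T := by
  have hST' : ∀ x, T (S x) = S (T x) := fun x => (hST x).symm
  have hmin' : minimalST T S := by
    intro x
    have hs : {y : X | ∃ n m : ℤ, y = hpow T n (hpow S m x)}
        = {y : X | ∃ n m : ℤ, y = hpow S n (hpow T m x)} := by
      ext y
      constructor
      · rintro ⟨n, m, rfl⟩; exact ⟨m, n, (hpow_comm S T hST m n x).symm⟩
      · rintro ⟨n, m, rfl⟩; exact ⟨m, n, hpow_comm S T hST n m x⟩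
    rw [hs]; exact hmin x
  have hd' : distalST T S := by
    intro x y hxy
    obtain ⟨ε, hε, hh⟩ := hd x y hxy
    refine ⟨ε, hε, fun n m => ?_⟩
    rw [← hpow_comm S T hST m n x, ← hpow_comm S T hST m n y]
    exact hh m n
  have iffS : ∀ x y : X, ((x, y, y, y) ∈ cube S T ↔ (x, y) ∈ relS S T) := by
    intro x y
    constructor
    · intro hh; exact ⟨y, hh⟩
    · rintro ⟨a, ha⟩; exact key_lemma S T hST hmin hd ha
  have iffT : ∀ x y : X, ((x, y, y, y) ∈ cube S T ↔ (x, y) ∈ relT S T) := by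
    intro x y
    constructor
    · intro hh; exact ⟨y, hh⟩
    · rintro ⟨b, hb⟩
      have h1 : (x, y, b, b) ∈ cube T S := cube_swap23 S T hST hb
      have h2 : (x, y, y, y) ∈ cube T S := key_lemma T S hST' hmin' hd' h1
      exact cube_swap23 T S hST' h2
  refine ⟨fun x y => ⟨iffS x y, iffT x y⟩, ?_, ?_⟩
  · ext ⟨x, y⟩
    exact (iffS x y).symm.trans (iffT x y)
  · ext ⟨x, y⟩
    simp only [Set.mem_inter_iff]
    exact ⟨fun hh => ⟨hh, (iffT x y).mp ((iffS x y).mpr hh)⟩, fun hh => hh.1⟩
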